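/- For every integer m ≥ 1, B_{m-1}(x) = Σ_{k=1}^{m} S(m,k) (-1)^{k-1} D_{k-1}(1-x) as polynomials in x. -/

import Mathlib

open Polynomial Finset

/-- Stirling numbers of the second kind. -/
def stirling2 : ℕ → ℕ → ℕ
  | 0, 0 => 1
  | 0, _ + 1 => 0
  | _ + 1, 0 => 0
  | n + 1, k + 1 => (k + 1) * stirling2 n (k + 1) + stirling2 n k

/-- Signed Stirling numbers of the first kind. -/
def stirling1 : ℕ → ℕ → ℤ
  | 0, 0 => 1
  | 0, _ + 1 => 0
  | n + 1, 0 => -(n : ℤ) * stirling1 n 0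
  | n + 1, k + 1 => stirling1 n k - (n : ℤ) * stirling1 n (k + 1)

/-- The Bell polynomial `B_m(x) = ∑_{j=0}^m S(m,j) x^j` over `ℤ`. -/
noncomputable def bellPoly (m : ℕ) : Polynomial ℤ :=
  ∑ j ∈ range (m + 1), (stirling2 m j : ℤ) • X ^ j

/-- The derangement polynomial `D_m(x) = ∑_{j=0}^m C(m,j) j! (x-1)^{m-j}` over `ℤ`. -/
noncomputable def derPoly (m : ℕ) : Polynomial ℤ :=
  ∑ j ∈ range (m + 1), ((m.choose j * j.factorial : ℕ) : ℤ) • (X - 1) ^ (m - j)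

/-- The Bell numbers `B_m = ∑_j S(m,j)`. -/
def bell (m : ℕ) : ℕ := ∑ j ∈ range (m + 1), stirling2 m j

lemma stirling2_eq_zero : ∀ n k : ℕ, n < k → stirling2 n k = 0
  | 0, _ + 1, _ => rfl
  | n + 1, k + 1, h => by
    have h1 : n < k + 1 := by omega
    have h2 : n < k := by omega
    simp [stirling2, stirling2_eq_zero n (k+1) h1, stirling2_eq_zero n k h2]

lemma choose_fact_step (i t : ℕ) :
    (i + t + 1) * ((i + t).choose i * t.factorial) =
      (i + t + 1).choose i * (t + 1).factorial := by
  apply Nat.eq_of_mul_eq_mul_right (Nat.factorial_pos i)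
  have h1 : (i + t).choose i * i.factorial * ((i + t) - i).factorial = (i + t).factorial :=
    Nat.choose_mul_factorial_mul_factorial (by omega)
  have h2 : (i + t + 1).choose i * i.factorial * ((i + t + 1) - i).factorial
      = (i + t + 1).factorial :=
    Nat.choose_mul_factorial_mul_factorial (by omega)
  have e1 : (i + t) - i = t := by omega
  have e2 : (i + t + 1) - i = t + 1 := by omega
  rw [e1] at h1
  rw [e2] at h2
  calc (i + t + 1) * ((i + t).choose i * t.factorial) * i.factorial
      = (i + t + 1) * ((i + t).choose i * i.factorial * t.factorial) := by ring
    _ = (i + t + 1) * (i + t).factorial := by rw [mul_comm ((i+t).choose i) i.factorial]; rw [mul_comm i.factorial ((i+t).choose i)]; rw [h1]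
    _ = (i + t + 1).factorial := (Nat.factorial_succ _).symm
    _ = (i + t + 1).choose i * i.factorial * (t + 1).factorial := h2.symm
    _ = (i + t + 1).choose i * (t + 1).factorial * i.factorial := by ring

/-- The key combinatorial identity, proved by telescoping with the Stirling recurrence. -/
lemma key (n i : ℕ) :
    ∑ k ∈ Icc (i + 1) (n + 1),
        (-1 : ℤ) ^ (k - 1 - i) * (((k - 1).choose i * (k - 1 - i).factorial : ℕ) : ℤ)
          * stirling2 (n + 1) k
      = stirling2 n i := by
  set g : ℕ → ℤ := fun k => (-1) ^ (k - i) * ((k.choose i * (k - i).factorial : ℕ) : ℤ)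
      * stirling2 n k with hg
  have hIcc : Icc (i + 1) (n + 1) = Ico (i + 1) (n + 2) := rfl
  rw [hIcc, Finset.sum_Ico_eq_sum_range]
  have hN : n + 2 - (i + 1) = n + 1 - i := by omega
  rw [hN]
  have hterm : ∀ t ∈ range (n + 1 - i),
      (-1 : ℤ) ^ (i + 1 + t - 1 - i) *
          (((i + 1 + t - 1).choose i * (i + 1 + t - 1 - i).factorial : ℕ) : ℤ)
          * stirling2 (n + 1) (i + 1 + t)
        = (fun t => g (i + t)) t - (fun t => g (i + t)) (t + 1) := by
    intro t _
    have e1 : i + 1 + t - 1 = i + t := by omega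
    have e2 : i + t - i = t := by omega
    have e3 : i + 1 + t = (i + t) + 1 := by omega
    rw [e1, e2, e3]
    have hs : stirling2 (n + 1) ((i + t) + 1)
        = (i + t + 1) * stirling2 n (i + t + 1) + stirling2 n (i + t) := rfl
    rw [hs]
    simp only [hg]
    have f1 : (i + t) - i = t := by omega
    have f2 : i + (t + 1) = (i + t) + 1 := by omega
    have f3 : (i + t + 1) - i = t + 1 := by omega
    rw [f2]
    simp only [f1, f3]
    have hc := choose_fact_step i t
    push_cast [← hc]
    ring
  rw [Finset.sum_congr rfl hterm]
  rw [Finset.sum_range_sub' (fun t => g (i + t))]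
  rcases le_or_gt i n with h | h
  · have h1 : i + (n + 1 - i) = n + 1 := by omega
    rw [h1]
    simp [hg, stirling2_eq_zero n (n + 1) (by omega)]
  · have h1 : n + 1 - i = 0 := by omega
    rw [h1]
    simp [stirling2_eq_zero n i h]

lemma derp (d : ℕ) :
    (-1 : Polynomial ℤ) ^ d * (derPoly d).comp (1 - X) =
      ∑ i ∈ range (d + 1),
        ((-1 : ℤ) ^ (d - i) * ((d.choose i * (d - i).factorial : ℕ) : ℤ)) • (X : Polynomial ℤ) ^ i := by
  have hcomp : (derPoly d).comp (1 - X) =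
      ∑ j ∈ range (d + 1), ((d.choose j * j.factorial : ℕ) : ℤ) • (-X : Polynomial ℤ) ^ (d - j) := by
    rw [derPoly]
    have : (∑ j ∈ range (d + 1), ((d.choose j * j.factorial : ℕ) : ℤ) • ((X : Polynomial ℤ) - 1) ^ (d - j)).comp (1 - X)
        = ∑ j ∈ range (d + 1), (((d.choose j * j.factorial : ℕ) : ℤ) • ((X : Polynomial ℤ) - 1) ^ (d - j)).comp (1 - X) := by
      simp [Polynomial.eval₂_finset_sum, Polynomial.comp]
    rw [this]
    refine Finset.sum_congr rfl fun j _ => ?_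
    rw [Polynomial.smul_comp, Polynomial.pow_comp, Polynomial.sub_comp, Polynomial.X_comp,
      Polynomial.one_comp]
    ring_nf
  rw [hcomp, Finset.mul_sum, ← Finset.sum_range_reflect]
  refine Finset.sum_congr rfl fun j hj => ?_
  simp only [Finset.mem_range] at hj
  have e1 : d + 1 - 1 - j = d - j := by omega
  rw [e1]
  have e2 : d - (d - j) = j := by omega
  rw [e2]
  have e3 : d.choose (d - j) = d.choose j := Nat.choose_symm (by omega : j ≤ d)
  rw [e3]
  have hsign : ((-1 : Polynomial ℤ)) ^ d * (-X) ^ j = (-1) ^ (d - j) * X ^ j := by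
    have hd : d + j = (d - j) + 2 * j := by omega
    calc ((-1 : Polynomial ℤ)) ^ d * (-X) ^ j = (-1) ^ d * ((-1) ^ j * X ^ j) := by
          rw [neg_pow (X : Polynomial ℤ) j]
      _ = (-1) ^ (d + j) * X ^ j := by rw [← mul_assoc, ← pow_add]
      _ = (-1) ^ (d - j) * ((-1) ^ (2 * j) * X ^ j) := by rw [hd, pow_add]; ring
      _ = (-1) ^ (d - j) * X ^ j := by
          rw [pow_mul]; norm_num
  rw [zsmul_eq_mul, zsmul_eq_mul]
  push_cast [Nat.cast_mul]
  linear_combination ((d.choose j : Polynomial ℤ) * ((d - j).factorial : Polynomial ℤ)) * hsign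

theorem bellPoly_eq_stirling2_derPoly (m : ℕ) (hm : 1 ≤ m) :
    bellPoly (m - 1) =
      ∑ k ∈ Icc 1 m, (stirling2 m k : ℤ) • ((-1) ^ (k - 1) * (derPoly (k - 1)).comp (1 - X)) := by
  obtain ⟨n, rfl⟩ : ∃ n, m = n + 1 := ⟨m - 1, by omega⟩
  ext c
  rw [Polynomial.finset_sum_coeff]
  have hL : (bellPoly (n + 1 - 1)).coeff c = stirling2 n c := by
    simp only [Nat.add_sub_cancel, bellPoly, Polynomial.finset_sum_coeff, Polynomial.coeff_smul,
      Polynomial.coeff_X_pow, smul_eq_mul, mul_ite, mul_one, mul_zero]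
    rw [Finset.sum_ite_eq (range (n + 1)) c (fun j => (stirling2 n j : ℤ))]
    split_ifs with h
    · rfl
    · rw [stirling2_eq_zero n c (by simpa using h)]; rfl
  rw [hL]
  have hterm : ∀ k ∈ Icc 1 (n + 1),
      ((stirling2 (n + 1) k : ℤ) •
          ((-1 : Polynomial ℤ) ^ (k - 1) * (derPoly (k - 1)).comp (1 - X))).coeff c
        = if c + 1 ≤ k then
            (-1 : ℤ) ^ (k - 1 - c) * (((k - 1).choose c * (k - 1 - c).factorial : ℕ) : ℤ)
              * stirling2 (n + 1) k
          else 0 := by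
    intro k hk
    rw [Polynomial.coeff_smul, derp (k - 1), Polynomial.finset_sum_coeff]
    simp only [Polynomial.coeff_smul, Polynomial.coeff_X_pow, smul_eq_mul, mul_ite, mul_one,
      mul_zero]
    rw [Finset.sum_ite_eq (range (k - 1 + 1)) c
      (fun i => (-1 : ℤ) ^ (k - 1 - i) * ((k - 1).choose i * (k - 1 - i).factorial : ℕ))]
    simp only [Finset.mem_Icc] at hk
    have hk1 : k - 1 + 1 = k := by omega
    rw [hk1]
    simp only [Finset.mem_range]
    by_cases hc : c + 1 ≤ k
    · rw [if_pos (show c < k by omega), if_pos hc]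
      ring
    · rw [if_neg (show ¬ c < k by omega), if_neg hc, mul_zero]
  rw [Finset.sum_congr rfl hterm, Finset.sum_ite, Finset.sum_const_zero, add_zero]
  have hfilter : (Icc 1 (n + 1)).filter (fun k => c + 1 ≤ k) = Icc (c + 1) (n + 1) := by
    ext x
    simp only [Finset.mem_filter, Finset.mem_Icc]
    omega
  rw [hfilter, key n c]
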